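/- Let R be a commutative local ring of characteristic 2 such that ([1] − [u])·([1] − [v]) = 0 in GW(R) for all units u, v of R. Then every element of GW(R) can be written uniquely in the form k·[1] + ([1] − [u]) for an integer k and a square class [u] ∈ G(R); that is, the map ℤ × G(R) → GW(R) sending (k, [u]) to k·[1] + ([1] − [u]) is a well-defined isomorphism of abelian groups (where G(R) is viewed as an abelian group). -/

import Mathlib

noncomputable section

/-- The subgroup of squares of units of a commutative ring. -/
def squareUnits (R : Type) [CommRing R] : Subgroup Rˣ :=
  (powMonoidHom 2 : Rˣ →* Rˣ).range

/-- The group of square classes `Rˣ/(Rˣ)²`. -/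
def SqCl (R : Type) [CommRing R] : Type := Rˣ ⧸ squareUnits R

instance (R : Type) [CommRing R] : CommGroup (SqCl R) :=
  QuotientGroup.Quotient.commGroup (squareUnits R)

/-- The square class `[a]` of a unit `a`. -/
def cls {R : Type} [CommRing R] (a : Rˣ) : SqCl R := QuotientGroup.mk a

/-- The group ring `ℤ[Rˣ/(Rˣ)²]`. -/
abbrev GRing (R : Type) [CommRing R] := MonoidAlgebra ℤ (SqCl R)

/-- The generator `[a]` of the group ring, for a unit `a`. -/
def gen {R : Type} [CommRing R] (a : Rˣ) : GRing R :=
  MonoidAlgebra.of ℤ (SqCl R) (cls a)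

/-- The set of relations defining the Grothendieck–Witt ring of a (connected semi-)local ring:
`([a₁]+[a₂]+[a₃]+[a₄]) − ([b₁]+[b₂]+[b₃]+[b₄])` whenever there exists `P ∈ GL₄(R)` with
`P ⬝ diag(a₁,…,a₄) ⬝ Pᵀ = diag(b₁,…,b₄)`. -/
def gwRel (R : Type) [CommRing R] : Set (GRing R) :=
  {x | ∃ (a b : Fin 4 → Rˣ) (P : Matrix (Fin 4) (Fin 4) R),
    IsUnit P.det ∧
    P * Matrix.diagonal (fun i => (a i : R)) * P.transpose =
      Matrix.diagonal (fun i => (b i : R)) ∧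
    x = (∑ i, gen (a i)) - (∑ i, gen (b i))}

/-- The (symmetric) Grothendieck–Witt ring of `R`, presented à la Knebusch–Rosenberg–Ware. -/
abbrev GW (R : Type) [CommRing R] := GRing R ⧸ Ideal.span (gwRel R)

/-- The class `[a] ∈ GW(R)` of a unit `a`. -/
def gw {R : Type} [CommRing R] (a : Rˣ) : GW R :=
  Ideal.Quotient.mk (Ideal.span (gwRel R)) (gen a)

/-- The (symmetric) Witt ring of `R` : the quotient of `GW(R)` by the ideal generated by the
hyperbolic element `[1] + [-1]`. -/
abbrev Wr (R : Type) [CommRing R] := GW R ⧸ Ideal.span {gw (R := R) 1 + gw (-1)}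

/-- The class in the Witt ring of a unit `a`. -/
def wcl {R : Type} [CommRing R] (a : Rˣ) : Wr R :=
  Ideal.Quotient.mk (Ideal.span {gw (R := R) 1 + gw (-1)}) (gw a)

namespace GWAux

variable {R : Type} [CommRing R]

def cgw (R : Type) [CommRing R] (x : SqCl R) : GW R :=
  Ideal.Quotient.mk (Ideal.span (gwRel R)) (MonoidAlgebra.of ℤ (SqCl R) x)

lemma gw_eq_cgw (a : Rˣ) : gw a = cgw R (cls a) := rfl

lemma cls_surj : Function.Surjective (cls (R := R)) :=
  fun x => QuotientGroup.mk_surjective x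

lemma cls_mul (a b : Rˣ) : cls (a * b) = cls a * cls b := rfl

lemma sqcl_sq (x : SqCl R) : x * x = 1 := by
  obtain ⟨u, rfl⟩ := cls_surj x
  rw [← cls_mul]
  exact (QuotientGroup.eq_one_iff _).mpr ⟨u, by simp [sq]⟩

lemma sqcl_inv (x : SqCl R) : x⁻¹ = x :=
  inv_eq_of_mul_eq_one_right (sqcl_sq x)

lemma gw_one : gw (R := R) 1 = 1 := by
  have h1 : cls (R := R) 1 = 1 := rfl
  unfold gw gen
  rw [h1, map_one, map_one]

def eps (R : Type) [CommRing R] : GRing R →ₐ[ℤ] ℤ := (MonoidAlgebra.lift ℤ ℤ (SqCl R)) 1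

def dd (R : Type) [CommRing R] : GRing R →+ Additive (SqCl R) :=
  (Finsupp.liftAddHom fun g => (zmultiplesHom (Additive (SqCl R))) (Additive.ofMul g)).comp
    MonoidAlgebra.coeffAddEquiv.toAddMonoidHom

lemma eps_of (g : SqCl R) : eps R (MonoidAlgebra.of ℤ (SqCl R) g) = 1 := by
  simp [eps]

lemma eps_single (g : SqCl R) (n : ℤ) : eps R (MonoidAlgebra.single g n) = n := by
  simp [eps, MonoidAlgebra.lift_single]

lemma dd_single (g : SqCl R) (n : ℤ) :
    dd R (MonoidAlgebra.single g n) = n • Additive.ofMul g := by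
  exact Finsupp.liftAddHom_apply_single
    (fun g => (zmultiplesHom (Additive (SqCl R))) (Additive.ofMul g)) g n

lemma dd_of (g : SqCl R) : dd R (MonoidAlgebra.of ℤ (SqCl R) g) = Additive.ofMul g := by
  simpa using dd_single g 1

lemma dd_one : dd R 1 = 0 := by
  simpa [MonoidAlgebra.one_def] using dd_of (1 : SqCl R)


lemma eps_mul (r s : GRing R) : eps R (r * s) = eps R r * eps R s := map_mul _ _ _

lemma dd_mul (r s : GRing R) :
    dd R (r * s) = eps R s • dd R r + eps R r • dd R s := by
  induction r using MonoidAlgebra.induction_on with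
  | of g =>
    induction s using MonoidAlgebra.induction_on with
    | of g' =>
      rw [← map_mul (MonoidAlgebra.of ℤ (SqCl R))]
      simp only [dd_of, eps_of, ofMul_mul, one_smul]
    | add f1 f2 h1 h2 =>
      simp only [mul_add, map_add, h1, h2, smul_add, add_smul]
      abel
    | smul n f hf =>
      rw [mul_smul_comm]
      simp only [map_zsmul, smul_eq_mul, hf, smul_add, smul_smul]
      rw [mul_comm n ((eps R) f), mul_comm n ((eps R) ((MonoidAlgebra.of ℤ (SqCl R)) g))]
  | add f1 f2 h1 h2 =>
    simp only [add_mul, map_add, h1, h2, smul_add, add_smul]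
    abel
  | smul n f hf =>
    rw [smul_mul_assoc]
    simp only [map_zsmul, smul_eq_mul, hf, smul_add, smul_smul]
    rw [mul_comm n ((eps R) s)]


lemma rel_vanish {z : GRing R} (hz : z ∈ gwRel R) : eps R z = 0 ∧ dd R z = 0 := by
  obtain ⟨a, b, P, hP, hM, rfl⟩ := hz
  constructor
  · simp [gen, map_sub, map_sum, eps_single]
  · have hdet : (P.det * P.det) * (∏ i, (a i : R)) = ∏ i, (b i : R) := by
      have h0 := congrArg Matrix.det hM
      rw [Matrix.det_mul, Matrix.det_mul, Matrix.det_transpose, Matrix.det_diagonal,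
        Matrix.det_diagonal] at h0
      linear_combination h0
    have hu : hP.unit * hP.unit * ∏ i, a i = ∏ i, b i := by
      apply Units.ext
      rw [Units.val_mul, Units.val_mul, Units.coe_prod, Units.coe_prod]
      simpa [IsUnit.unit_spec] using hdet
    have hcls : cls (∏ i, a i) = cls (∏ i, b i) := by
      rw [← hu, cls_mul]
      have h1 : cls (hP.unit * hP.unit) = 1 :=
        (QuotientGroup.eq_one_iff _).mpr
          (MonoidHom.mem_range.mpr ⟨hP.unit, by simp [powMonoidHom_apply, sq]⟩)
      rw [h1, one_mul]
    have key : (∑ i, Additive.ofMul (cls (a i))) = ∑ i, Additive.ofMul (cls (b i)) := by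
      rw [← ofMul_prod, ← ofMul_prod]
      have ha : cls (∏ i, a i) = ∏ i, cls (a i) := QuotientGroup.mk_prod _ _
      have hb : cls (∏ i, b i) = ∏ i, cls (b i) := QuotientGroup.mk_prod _ _
      rw [← ha, ← hb, hcls]
    simp [gen, map_sub, map_sum, dd_single, key]

lemma span_vanish {z : GRing R} (hz : z ∈ Ideal.span (gwRel R)) :
    eps R z = 0 ∧ dd R z = 0 := by
  refine Submodule.span_induction (fun x hx => rel_vanish hx) (by simp) ?_ ?_ hz
  · rintro x y _ _ ⟨hx1, hx2⟩ ⟨hy1, hy2⟩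
    simp [hx1, hx2, hy1, hy2]
  · rintro r x _ ⟨hx1, hx2⟩
    refine ⟨?_, ?_⟩
    · rw [smul_eq_mul, map_mul, hx1, mul_zero]
    · rw [smul_eq_mul, dd_mul, hx1, hx2]
      simp


lemma cgw_one : cgw R (1 : SqCl R) = 1 := by
  unfold cgw; rw [map_one, map_one]

lemma cgw_mul (h : ∀ u v : Rˣ, (gw (R := R) 1 - gw u) * (gw 1 - gw v) = 0)
    (x y : SqCl R) : cgw R (x * y) = cgw R x + cgw R y - 1 := by
  obtain ⟨u, rfl⟩ := cls_surj x
  obtain ⟨v, rfl⟩ := cls_surj y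
  have h0 := h u v
  rw [gw_one, gw_eq_cgw u, gw_eq_cgw v] at h0
  have hmul : cgw R (cls u) * cgw R (cls v) = cgw R (cls u * cls v) := by
    unfold cgw
    rw [← map_mul, ← map_mul]
  linear_combination h0 - hmul

end GWAux

set_option maxHeartbeats 1000000 in
set_option synthInstance.maxHeartbeats 400000 in
theorem gw_square_zero_extension'
    (R : Type) [CommRing R]
    (h : ∀ u v : Rˣ, (gw (R := R) 1 - gw u) * (gw 1 - gw v) = 0) :
    ∃ e : ℤ × Additive (SqCl R) ≃+ GW R,
      ∀ (k : ℤ) (u : Rˣ),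
        e (k, Additive.ofMul (cls u)) = k • gw (R := R) 1 + (gw 1 - gw u) := by
  classical
  let f : ℤ × Additive (SqCl R) →+ GW R := AddMonoidHom.mk'
    (fun p => p.1 • gw (R := R) 1 + (gw 1 - GWAux.cgw R p.2.toMul))
    (by
      rintro ⟨k, x⟩ ⟨l, y⟩
      simp only [Prod.fst_add, Prod.snd_add, toMul_add]
      rw [GWAux.cgw_mul h, GWAux.gw_one, add_smul]
      ring)
  have hf : ∀ p, f p = p.1 • gw (R := R) 1 + (gw 1 - GWAux.cgw R p.2.toMul) :=
    fun p => by simp only [f, AddMonoidHom.mk'_apply]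
  have hinj : Function.Injective f := by
    rw [injective_iff_map_eq_zero]
    rintro ⟨k, x⟩ hx
    rw [hf] at hx
    have hz : (Ideal.Quotient.mk (Ideal.span (gwRel R)))
        ((k + 1) • (1 : GRing R) - MonoidAlgebra.of ℤ (SqCl R) x.toMul) = 0 := by
      rw [map_sub, map_zsmul, map_one]
      rw [GWAux.gw_one] at hx
      have : GWAux.cgw R x.toMul =
          (Ideal.Quotient.mk (Ideal.span (gwRel R))) (MonoidAlgebra.of ℤ (SqCl R) x.toMul) := rfl
      rw [← this]
      simp only [zsmul_eq_mul] at hx ⊢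
      push_cast
      linear_combination hx
    obtain ⟨he, hd⟩ := GWAux.span_vanish (Ideal.Quotient.eq_zero_iff_mem.mp hz)
    rw [map_sub, map_zsmul, map_one, GWAux.eps_of] at he
    rw [map_sub, map_zsmul, GWAux.dd_one, GWAux.dd_of, smul_zero, zero_sub, neg_eq_zero,
      ofMul_toMul] at hd
    rw [smul_eq_mul, mul_one] at he
    have hk : k = 0 := by omega
    simp [hk, hd, Prod.ext_iff]
  have hsurj : Function.Surjective f := by
    intro y
    obtain ⟨z, rfl⟩ := Ideal.Quotient.mk_surjective y
    induction z using MonoidAlgebra.induction_on with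
    | of g =>
      refine ⟨(1, -Additive.ofMul g), ?_⟩
      have h2 : GWAux.cgw R g + GWAux.cgw R g = 1 + 1 := by
        have h3 := GWAux.cgw_mul h g g
        rw [GWAux.sqcl_sq, GWAux.cgw_one] at h3
        linear_combination -h3
      rw [hf]
      have hg : (Ideal.Quotient.mk (Ideal.span (gwRel R))) (MonoidAlgebra.of ℤ (SqCl R) g)
          = GWAux.cgw R g := rfl
      rw [hg]
      simp only [toMul_neg, toMul_ofMul, GWAux.sqcl_inv, GWAux.gw_one, one_smul]
      linear_combination -h2
    | add z1 z2 h1 h2 =>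
      obtain ⟨p1, hp1⟩ := h1
      obtain ⟨p2, hp2⟩ := h2
      exact ⟨p1 + p2, by rw [map_add, hp1, hp2, map_add]⟩
    | smul n z hz =>
      obtain ⟨p, hp⟩ := hz
      exact ⟨n • p, by rw [map_zsmul, hp, map_zsmul]⟩
  refine ⟨AddEquiv.ofBijective f ⟨hinj, hsurj⟩, fun k u => ?_⟩
  change f (k, Additive.ofMul (cls u)) = _
  rw [hf]
  simp only [toMul_ofMul]
  rw [← GWAux.gw_eq_cgw u]


/-- If `R` is a commutative local ring of characteristic `2` in which all
2-fold Pfister forms vanish, then every element of `GW(R)` is uniquely of the form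
`k·[1] + ([1] − [u])`: the map `(k, [u]) ↦ k·[1] + ([1] − [u])` is an isomorphism of abelian
groups `ℤ × G(R) ≅ GW(R)`. -/
theorem gw_square_zero_extension
    (R : Type) [CommRing R] [IsLocalRing R] [CharP R 2]
    (h : ∀ u v : Rˣ, (gw (R := R) 1 - gw u) * (gw 1 - gw v) = 0) :
    ∃ e : ℤ × Additive (SqCl R) ≃+ GW R,
      ∀ (k : ℤ) (u : Rˣ),
        e (k, Additive.ofMul (cls u)) = k • gw (R := R) 1 + (gw 1 - gw u) := by
  exact gw_square_zero_extension' R h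

end
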